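/- arXiv:2210.09751 — 2 statements merged into one kernel-verified Lean document; each statement's English description precedes it below -/
import Mathlib

section
/- Let f : S¹ → S¹ be a circle homeomorphism with exactly one non-wandering point, which is then a fixed point a (so NW(f) = Fix(f) = {a}). Then the non-wandering set of the induced map C(f) on the hyperspace of subcontinua consists of exactly two points: the singleton {a} and the whole circle S¹. -/
open Filter Topology TopologicalSpace Set
open scoped ENNReal

/-- The dynamic distance `d_n^f(x,y) = max_{0 ≤ k ≤ n-1} d(f^k x, f^k y)`. -/
noncomputable def dynDist {X : Type*} [MetricSpace X] (f : X → X) (n : ℕ) (x y : X) : ℝ :=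
  ((Finset.range n).sup fun k => nndist (f^[k] x) (f^[k] y) : NNReal)

/-- A finite set `E` is `(n,ε)`-separated for `f`. -/
def IsDynSeparated {X : Type*} [MetricSpace X] (f : X → X) (n : ℕ) (ε : ℝ) (E : Finset X) :
    Prop :=
  ∀ x ∈ E, ∀ y ∈ E, x ≠ y → ε ≤ dynDist f n x y

/-- `S(n,ε;Y)`: the maximal cardinality of an `(n,ε)`-separated subset of `Y`. -/
noncomputable def maxSep {X : Type*} [MetricSpace X] (f : X → X) (Y : Set X) (n : ℕ) (ε : ℝ) :
    ℕ :=
  sSup {m : ℕ | ∃ E : Finset X, ↑E ⊆ Y ∧ E.card = m ∧ IsDynSeparated f n ε E}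

/-- The polynomial entropy `h_pol(f;Y)`.  Since `ε ↦ S(n,ε;Y)` is nonincreasing, the limit as
`ε → 0` of the `limsup` coincides with the supremum over `ε > 0`. -/
noncomputable def polEnt {X : Type*} [MetricSpace X] (f : X → X) (Y : Set X) : ℝ≥0∞ :=
  ⨆ (ε : ℝ) (_ : 0 < ε),
    Filter.atTop.limsup fun n : ℕ =>
      ENNReal.ofReal (Real.log (maxSep f Y n ε) / Real.log n)

/-- The set of non-wandering points of `f`. -/
def nonWandering {X : Type*} [TopologicalSpace X] (f : X → X) : Set X :=
  {p | ∀ U ∈ nhds p, ∃ n : ℕ, 1 ≤ n ∧ (f^[n] '' U ∩ U).Nonempty}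

/-- The induced map `2^f` on the hyperspace of nonempty closed (= compact) subsets of a
compact metric space. -/
noncomputable def induced2 {X : Type*} [TopologicalSpace X] (f : X → X) (hf : Continuous f) :
    NonemptyCompacts X → NonemptyCompacts X :=
  fun A => ⟨⟨f '' A, A.isCompact.image hf⟩, A.nonempty.image f⟩

/-- The hyperspace `C(X)` of subcontinua (nonempty closed connected subsets) of `X`. -/
abbrev Subcontinua (X : Type*) [TopologicalSpace X] :=
  {A : NonemptyCompacts X // IsConnected (A : Set X)}

/-- The induced map `C(f)` on the hyperspace of subcontinua. -/
noncomputable def inducedC {X : Type*} [TopologicalSpace X] (f : X → X) (hf : Continuous f) :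
    Subcontinua X → Subcontinua X :=
  fun A => ⟨induced2 f hf A.1, A.2.image f hf.continuousOn⟩

/-- The `k`-fold symmetric product `X^{*k}`: nonempty subsets of `X` with at most `k` points. -/
abbrev SymProd (X : Type*) [TopologicalSpace X] (k : ℕ) :=
  {A : NonemptyCompacts X // (A : Set X).Finite ∧ (A : Set X).ncard ≤ k}

/-- The induced map `f^{*k}` on the `k`-fold symmetric product. -/
noncomputable def inducedSym {X : Type*} [TopologicalSpace X] (f : X → X) (hf : Continuous f)
    (k : ℕ) : SymProd X k → SymProd X k :=
  fun A => ⟨induced2 f hf A.1, A.2.1.image f, le_trans (Set.ncard_image_le A.2.1) A.2.2⟩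

/-- Sets `U 0, …, U (L-1)` are mutually singular for `f`. -/
def MutuallySingularSets {X : Type*} [TopologicalSpace X] (f : X → X) {L : ℕ}
    (U : Fin L → Set X) : Prop :=
  ∀ M : ℕ, ∃ x : X, ∃ n : Fin L → ℕ, (∀ j, 1 ≤ n j ∧ f^[n j] x ∈ U j) ∧
    ∀ i j, i ≠ j → (M : ℤ) < |(n i : ℤ) - (n j : ℤ)|

/-- A finite set `S ⊆ X \ NW(f)` is singular: it consists of mutually singular points, i.e.
every family of respective neighbourhoods of its points is mutually singular. -/
def IsSingularSet {X : Type*} [TopologicalSpace X] (f : X → X) (S : Set X) : Prop :=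
  S.Finite ∧ (∀ x ∈ S, x ∉ nonWandering f) ∧
  ∀ (L : ℕ) (x : Fin L → X), Function.Injective x → Set.range x = S →
    ∀ U : Fin L → Set X, (∀ j, U j ∈ nhds (x j)) → MutuallySingularSets f U

/-- The set of codings of length-`n` orbit segments of points of `Y` relative to the family
`F`, where the letter `none` stands for `Y_∞ = Y \ ⋃ F`. -/
def codings {X : Type*} (f : X → X) {L : ℕ} (F : Fin L → Set X) (Y : Set X) (n : ℕ) :
    Set (Fin n → Option (Fin L)) :=
  {w | ∃ x ∈ Y, ∀ j : Fin n, match w j with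
    | some i => f^[(j : ℕ)] x ∈ F i
    | none => f^[(j : ℕ)] x ∈ Y \ ⋃ i, F i}

/-- The polynomial entropy of `f` on `Y` relative to the family `F`:
`limsup_n log #A_n(F;Y) / log n`. -/
noncomputable def polEntRel {X : Type*} (f : X → X) {L : ℕ} (F : Fin L → Set X) (Y : Set X) :
    ℝ≥0∞ :=
  Filter.atTop.limsup fun n : ℕ =>
    ENNReal.ofReal (Real.log ((codings f F Y n).ncard) / Real.log n)

/-- The circle is connected. -/
theorem circle_isConnected_univ : IsConnected (Set.univ : Set Circle) := by
  have hsurj : Function.Surjective Circle.exp := fun z => ⟨Complex.arg z, Circle.exp_arg z⟩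
  have : ConnectedSpace Circle :=
    { toPreconnectedSpace := ⟨by
        rw [← Set.image_univ_of_surjective hsurj]
        exact isPreconnected_univ.image _ Circle.exp.continuous.continuousOn⟩,
      toNonempty := ⟨1⟩ }
  exact isConnected_univ

noncomputable section
namespace Stmt17Aux
open Complex Metric Set Real TopologicalSpace

/-- chart map `(0,2π) → Circle` based at `a`. -/
def ee (a : Circle) (t : ℝ) : Circle := a * Circle.exp t
/-- angle coordinate at `a`, valued in `(0,2π)` away from `a`. -/
def th (a : Circle) (z : Circle) : ℝ := Complex.arg (-((z : ℂ) / (a : ℂ))) + π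

lemma cont_ee (a : Circle) : Continuous (ee a) :=
  continuous_const.mul Circle.exp.continuous

lemma abs_w (a z : Circle) : ‖(-((z : ℂ) / (a : ℂ)))‖ = 1 := by
  simp [map_div₀, Circle.norm_coe]

lemma eq_of_im_re {a z : Circle} (him : (-((z : ℂ) / (a : ℂ))).im = 0)
    (hre : (-((z : ℂ) / (a : ℂ))).re ≤ 0) : z = a := by
  have habs := abs_w a z
  have hre1 : (-((z : ℂ) / (a : ℂ))).re = -1 := by
    have h3 : ‖(-((z : ℂ) / (a : ℂ)))‖ = |(-((z : ℂ) / (a : ℂ))).re| := by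
      rw [Complex.norm_def, Complex.normSq_apply, him, mul_zero, add_zero,
        Real.sqrt_mul_self_eq_abs]
    rw [habs] at h3
    rcases (abs_eq (by norm_num : (0:ℝ) ≤ 1)).mp h3.symm with h4 | h4
    · linarith
    · exact h4
  have hw : -((z : ℂ) / (a : ℂ)) = -1 := by apply Complex.ext <;> simp [hre1, him]
  have hz : (z : ℂ) / (a : ℂ) = 1 := by linear_combination -hw
  apply Circle.coe_injective
  rwa [div_eq_one_iff_eq (Circle.coe_ne_zero a)] at hz

lemma th_ee (a : Circle) {t : ℝ} (ht : t ∈ Ioc 0 (2*π)) : th a (ee a t) = t := by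
  have h1 : -(((ee a t : Circle) : ℂ) / (a : ℂ)) = ((Circle.exp (t - π) : Circle) : ℂ) := by
    simp only [ee, Circle.coe_mul, Circle.coe_exp]
    rw [mul_comm, mul_div_assoc, div_self (Circle.coe_ne_zero a), mul_one]
    rw [Complex.ofReal_sub, sub_mul, Complex.exp_sub, Complex.exp_pi_mul_I]
    ring
  rw [th, h1, Circle.arg_exp (by linarith [ht.1]) (by linarith [ht.2])]
  ring

lemma th_mem (a : Circle) {z : Circle} (hz : z ≠ a) : th a z ∈ Ioo 0 (2*π) := by
  have harg : Complex.arg (-((z : ℂ) / (a : ℂ))) ≠ π := by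
    intro h
    rw [Complex.arg_eq_pi_iff] at h
    exact hz (eq_of_im_re h.2 (le_of_lt h.1))
  have h1 := lt_of_le_of_ne (Complex.arg_le_pi (-((z : ℂ) / (a : ℂ)))) harg
  have h2 := Complex.neg_pi_lt_arg (-((z : ℂ) / (a : ℂ)))
  rw [th] at *
  constructor <;> [linarith; linarith]

lemma ee_th (a : Circle) {z : Circle} (hz : z ≠ a) : ee a (th a z) = z := by
  apply Circle.coe_injective
  have key : Complex.exp ((Complex.arg (-((z : ℂ) / (a : ℂ))) : ℂ) * Complex.I)
      = -((z : ℂ) / (a : ℂ)) := by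
    have := Complex.norm_mul_exp_arg_mul_I (-((z : ℂ) / (a : ℂ)))
    rwa [abs_w, Complex.ofReal_one, one_mul] at this
  simp only [ee, Circle.coe_mul, Circle.coe_exp, th]
  rw [Complex.ofReal_add, add_mul, Complex.exp_add, key, Complex.exp_pi_mul_I]
  field_simp

lemma ee_ne (a : Circle) {t : ℝ} (ht : t ∈ Ioo 0 (2*π)) : ee a t ≠ a := by
  intro h
  have h1 : th a (ee a t) = t := th_ee a ⟨ht.1, le_of_lt ht.2⟩
  have h2 : th a a = 2*π := by
    have h3 : th a (ee a (2*π)) = 2*π := th_ee a ⟨by positivity, le_refl _⟩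
    have hee : ee a (2*π) = a := by
      apply Circle.coe_injective
      simp only [ee, Circle.coe_mul, Circle.coe_exp]
      rw [show ((2*π : ℝ) : ℂ) = 2*π by push_cast; ring]
      rw [Complex.exp_two_pi_mul_I, mul_one]
    rwa [hee] at h3
  rw [h, h2] at h1
  exact absurd h1 (by linarith [ht.2])

lemma contAt_th (a : Circle) {z : Circle} (hz : z ≠ a) : ContinuousAt (th a) z := by
  have hcont : ContinuousAt (fun x : Circle => -((x : ℂ) / (a : ℂ))) z :=
    ((continuous_subtype_val.div_const _).neg).continuousAt
  have hslit : -((z : ℂ) / (a : ℂ)) ∈ Complex.slitPlane := by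
    rw [Complex.mem_slitPlane_iff]
    by_contra h
    push_neg at h
    exact hz (eq_of_im_re h.2 h.1)
  have harg : ContinuousAt (fun x : Circle => Complex.arg (-((x : ℂ) / (a : ℂ)))) z :=
    ContinuousAt.comp (g := Complex.arg) (Complex.continuousAt_arg hslit) hcont
  exact harg.add continuousAt_const
structure Chart (f : Circle → Circle) (a : Circle) : Type where
  e : ℝ → Circle
  th : Circle → ℝ
  g : ℝ → ℝ
  cont_e : Continuous e
  contAt_th : ∀ z : Circle, z ≠ a → ContinuousAt th z
  th_mem : ∀ z : Circle, z ≠ a → th z ∈ Ioo 0 (2*π)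
  e_th : ∀ z : Circle, z ≠ a → e (th z) = z
  th_e : ∀ t ∈ Ioo 0 (2*π), th (e t) = t
  e_ne : ∀ t ∈ Ioo 0 (2*π), e t ≠ a
  th_f : ∀ z : Circle, z ≠ a → th (f z) = g (th z)
  g_mem : ∀ t ∈ Ioo 0 (2*π), g t ∈ Ioo 0 (2*π)
  g_cont : ContinuousOn g (Ioo 0 (2*π))
  g_mono : StrictMonoOn g (Ioo 0 (2*π))
  g_surj : ∀ s ∈ Ioo 0 (2*π), ∃ t ∈ Ioo 0 (2*π), g t = s
  g_gt : ∀ t ∈ Ioo 0 (2*π), t < g t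

namespace Chart

variable {f : Circle → Circle} {a : Circle} (C : Chart f a)

lemma e_inj {s t : ℝ} (hs : s ∈ Ioo 0 (2*π)) (ht : t ∈ Ioo 0 (2*π))
    (h : C.e s = C.e t) : s = t := by
  rw [← C.th_e s hs, ← C.th_e t ht, h]

/-- the "band" sets are open -/
lemma isOpen_band (S : Set ℝ) (hS : IsOpen S) :
    IsOpen {z : Circle | z ≠ a ∧ C.th z ∈ S} := by
  rw [isOpen_iff_mem_nhds]
  rintro z ⟨hz, hthz⟩
  have h1 : {w : Circle | w ≠ a} ∈ nhds z :=
    (isOpen_compl_singleton (x := a)).mem_nhds hz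
  have h2 : C.th ⁻¹' S ∈ nhds z := (C.contAt_th z hz).preimage_mem_nhds (hS.mem_nhds hthz)
  filter_upwards [h1, h2] with w hw1 hw2
  exact ⟨hw1, hw2⟩

lemma iter_ne (hfi : Function.Injective f) (hfa : f a = a) (z : Circle) (hz : z ≠ a) (n : ℕ) : f^[n] z ≠ a := by
  induction n with
  | zero => simpa using hz
  | succ n ih =>
    rw [Function.iterate_succ_apply']
    intro h
    exact ih (hfi (h.trans hfa.symm))

lemma iter_fixed (hfa : f a = a) (n : ℕ) : f^[n] a = a :=
  Function.IsFixedPt.iterate hfa n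

lemma th_iter (hfi : Function.Injective f) (hfa : f a = a) (z : Circle) (hz : z ≠ a) (n : ℕ) : C.th (f^[n] z) = C.g^[n] (C.th z) := by
  induction n with
  | zero => simp
  | succ n ih =>
    rw [Function.iterate_succ_apply', Function.iterate_succ_apply',
      C.th_f _ (iter_ne hfi hfa z hz n), ih]

lemma g_iter_mem {t : ℝ} (ht : t ∈ Ioo 0 (2*π)) (n : ℕ) : C.g^[n] t ∈ Ioo 0 (2*π) := by
  induction n with
  | zero => simpa using ht
  | succ n ih => rw [Function.iterate_succ_apply']; exact C.g_mem _ ih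

lemma g_iter_ge {t : ℝ} (ht : t ∈ Ioo 0 (2*π)) {n : ℕ} (hn : 1 ≤ n) :
    C.g t ≤ C.g^[n] t := by
  induction n with
  | zero => omega
  | succ n ih =>
    rcases Nat.eq_or_lt_of_le hn with h | h
    · simp [← h]
    · have h1 : 1 ≤ n := by omega
      rw [Function.iterate_succ_apply']
      calc C.g t ≤ C.g^[n] t := ih h1
        _ ≤ C.g (C.g^[n] t) := le_of_lt (C.g_gt _ (C.g_iter_mem ht n))

lemma g_iter_mono (n : ℕ) : StrictMonoOn (C.g^[n]) (Ioo 0 (2*π)) := by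
  induction n with
  | zero => intro s hs t ht h; simpa using h
  | succ n ih =>
    intro s hs t ht h
    rw [Function.iterate_succ_apply', Function.iterate_succ_apply']
    exact C.g_mono (C.g_iter_mem hs n) (C.g_iter_mem ht n) (ih hs ht h)

lemma g_iter_surj (n : ℕ) {s : ℝ} (hs : s ∈ Ioo 0 (2*π)) :
    ∃ t ∈ Ioo 0 (2*π), C.g^[n] t = s := by
  induction n generalizing s with
  | zero => exact ⟨s, hs, rfl⟩
  | succ n ih =>
    obtain ⟨u, hu, hgu⟩ := C.g_surj s hs
    obtain ⟨t, ht, hgt⟩ := ih hu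
    exact ⟨t, ht, by rw [Function.iterate_succ_apply', hgt, hgu]⟩

lemma e_f_iter (hfi : Function.Injective f) (hfa : f a = a) {t : ℝ} (ht : t ∈ Ioo 0 (2*π)) (n : ℕ) :
    f^[n] (C.e t) = C.e (C.g^[n] t) := by
  have h1 : f^[n] (C.e t) ≠ a := iter_ne hfi hfa _ (C.e_ne t ht) n
  have h2 := C.th_iter hfi hfa (C.e t) (C.e_ne t ht) n
  rw [C.th_e t ht] at h2
  rw [← h2, C.e_th _ h1]
lemma arc_dichotomy {B : Set Circle} (hB : IsPreconnected B)
    {z₁ z₂ : Circle} (hz₁B : z₁ ∈ B) (hz₂B : z₂ ∈ B) (hz₁ : z₁ ≠ a) (hz₂ : z₂ ≠ a)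
    (hlt : C.th z₁ < C.th z₂) :
    (∀ s ∈ Icc (C.th z₁) (C.th z₂), C.e s ∈ B) ∨
    (∀ w : Circle, (w = a ∨ C.th w ∉ Ioo (C.th z₁) (C.th z₂)) → w ∈ B) := by
  set t₁ := C.th z₁ with ht₁def
  set t₂ := C.th z₂ with ht₂def
  have ht₁ : t₁ ∈ Ioo 0 (2*π) := C.th_mem z₁ hz₁
  have ht₂ : t₂ ∈ Ioo 0 (2*π) := C.th_mem z₂ hz₂
  by_contra hcon
  push_neg at hcon
  obtain ⟨⟨s, hs, hsB⟩, w, hw, hwB⟩ := hcon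
  have hes : C.e s ≠ z₁ := fun h => hsB (h ▸ hz₁B)
  have hes2 : C.e s ≠ z₂ := fun h => hsB (h ▸ hz₂B)
  have hsIoo : s ∈ Ioo t₁ t₂ := by
    constructor
    · rcases eq_or_lt_of_le hs.1 with h | h
      · exact absurd (h ▸ C.e_th z₁ hz₁) hes
      · exact h
    · rcases eq_or_lt_of_le hs.2 with h | h
      · exact absurd (h ▸ C.e_th z₂ hz₂ : C.e s = z₂) hes2
      · exact h
  have hs02 : s ∈ Ioo 0 (2*π) := ⟨lt_trans ht₁.1 hsIoo.1, lt_trans hsIoo.2 ht₂.2⟩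
  -- helper to contradict preconnectedness
  have sep : ∀ U₁ U₂ : Set Circle, IsOpen U₁ → IsOpen U₂ → (B ⊆ U₁ ∪ U₂) →
      (z₁ ∈ U₁ ∨ z₂ ∈ U₁) → (z₁ ∈ U₂ ∨ z₂ ∈ U₂) → U₁ ∩ U₂ = ∅ → False := by
    intro U₁ U₂ hU₁ hU₂ hcov hx hy hdisj
    have h1 : (B ∩ U₁).Nonempty := by
      rcases hx with h | h
      exacts [⟨z₁, hz₁B, h⟩, ⟨z₂, hz₂B, h⟩]
    have h2 : (B ∩ U₂).Nonempty := by
      rcases hy with h | h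
      exacts [⟨z₁, hz₁B, h⟩, ⟨z₂, hz₂B, h⟩]
    obtain ⟨x, -, hxU⟩ := hB U₁ U₂ hU₁ hU₂ hcov h1 h2
    rw [hdisj] at hxU
    exact hxU
  by_cases hwa : w = a
  · -- missing point is the base point a
    subst hwa
    refine sep {z | z ≠ w ∧ C.th z ∈ Iio s} {z | z ≠ w ∧ C.th z ∈ Ioi s}
      (C.isOpen_band _ isOpen_Iio) (C.isOpen_band _ isOpen_Ioi) ?_
      (Or.inl ⟨hz₁, hsIoo.1⟩) (Or.inr ⟨hz₂, hsIoo.2⟩) ?_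
    · intro b hb
      have hba : b ≠ w := fun h => hwB (h ▸ hb)
      have hbs : C.th b ≠ s := by
        intro h
        have heb : C.e s = b := by rw [← h]; exact C.e_th b hba
        exact hsB (heb ▸ hb)
      rcases lt_or_gt_of_ne hbs with h | h
      · exact Or.inl ⟨hba, h⟩
      · exact Or.inr ⟨hba, h⟩
    · ext z; simp only [mem_inter_iff, mem_setOf_eq, mem_empty_iff_false, iff_false]
      rintro ⟨⟨-, h1⟩, ⟨-, h2⟩⟩
      exact absurd (show C.th z < s from h1) (not_lt.mpr (le_of_lt (show s < C.th z from h2)))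
  · have hw' : C.th w ∉ Ioo t₁ t₂ := hw.resolve_left hwa
    set u := C.th w with hudef
    have hu02 : u ∈ Ioo 0 (2*π) := C.th_mem w hwa
    have hew : C.e u = w := C.e_th w hwa
    have hut₁ : u ≠ t₁ := by
      intro h
      exact hwB (by rw [← hew, h, ht₁def, C.e_th z₁ hz₁]; exact hz₁B)
    have hut₂ : u ≠ t₂ := by
      intro h
      exact hwB (by rw [← hew, h, ht₂def, C.e_th z₂ hz₂]; exact hz₂B)
    have hcases : u < t₁ ∨ t₂ < u := by
      rcases lt_or_ge u t₁ with h | h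
      · exact Or.inl h
      · right
        rcases lt_or_ge t₂ u with h2 | h2
        · exact h2
        · exact absurd ⟨lt_of_le_of_ne h (Ne.symm hut₁), lt_of_le_of_ne h2 hut₂⟩ hw'
    -- generic second separation: remove e s and w = e u
    rcases hcases with hu | hu
    · -- u < t₁ : separate z₁ (inside arc e''(u,s)) from z₂ (outside e''[u,s])
      refine sep {z | z ≠ a ∧ C.th z ∈ Ioo u s} (C.e '' Icc u s)ᶜ
        (C.isOpen_band _ isOpen_Ioo)
        (isCompact_Icc.image C.cont_e).isClosed.isOpen_compl ?_
        (Or.inl ⟨hz₁, hu, hsIoo.1⟩) (Or.inr ?_) ?_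
      · intro b hb
        by_cases hbi : b ∈ C.e '' Icc u s
        · obtain ⟨r, hr, hbr⟩ := hbi
          have hr02 : r ∈ Ioo 0 (2*π) := ⟨lt_of_lt_of_le hu02.1 hr.1, lt_of_le_of_lt hr.2 hs02.2⟩
          have hba : b ≠ a := hbr ▸ C.e_ne r hr02
          have hthb : C.th b = r := hbr ▸ C.th_e r hr02
          have hrs : r ≠ s := by
            intro h; exact hsB (by rw [← h, hbr]; exact hb)
          have hru : r ≠ u := by
            intro h; exact hwB (by rw [← hew, ← h, hbr]; exact hb)
          exact Or.inl ⟨hba, by rw [hthb]; exact ⟨lt_of_le_of_ne hr.1 (Ne.symm hru),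
            lt_of_le_of_ne hr.2 hrs⟩⟩
        · exact Or.inr hbi
      · -- z₂ ∉ e '' Icc u s
        intro h
        obtain ⟨r, hr, hbr⟩ := h
        have hr02 : r ∈ Ioo 0 (2*π) := ⟨lt_of_lt_of_le hu02.1 hr.1, lt_of_le_of_lt hr.2 hs02.2⟩
        have : t₂ = r := by rw [ht₂def, ← hbr, C.th_e r hr02]
        exact absurd (this ▸ hr.2) (not_le.mpr hsIoo.2)
      · ext z; simp only [mem_inter_iff, mem_setOf_eq, mem_compl_iff, mem_empty_iff_false,
          iff_false]
        rintro ⟨⟨hza, hz⟩, h2⟩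
        exact h2 ⟨C.th z, ⟨le_of_lt hz.1, le_of_lt hz.2⟩, C.e_th z hza⟩
    · -- t₂ < u : separate z₂ (inside arc e''(s,u)) from z₁ (outside e''[s,u])
      refine sep {z | z ≠ a ∧ C.th z ∈ Ioo s u} (C.e '' Icc s u)ᶜ
        (C.isOpen_band _ isOpen_Ioo)
        (isCompact_Icc.image C.cont_e).isClosed.isOpen_compl ?_
        (Or.inr ⟨hz₂, hsIoo.2, hu⟩) (Or.inl ?_) ?_
      · intro b hb
        by_cases hbi : b ∈ C.e '' Icc s u
        · obtain ⟨r, hr, hbr⟩ := hbi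
          have hr02 : r ∈ Ioo 0 (2*π) := ⟨lt_of_lt_of_le hs02.1 hr.1, lt_of_le_of_lt hr.2 hu02.2⟩
          have hba : b ≠ a := hbr ▸ C.e_ne r hr02
          have hthb : C.th b = r := hbr ▸ C.th_e r hr02
          have hrs : r ≠ s := by
            intro h; exact hsB (by rw [← h, hbr]; exact hb)
          have hru : r ≠ u := by
            intro h; exact hwB (by rw [← hew, ← h, hbr]; exact hb)
          exact Or.inl ⟨hba, by rw [hthb]; exact ⟨lt_of_le_of_ne hr.1 (Ne.symm hrs),
            lt_of_le_of_ne hr.2 hru⟩⟩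
        · exact Or.inr hbi
      · intro h
        obtain ⟨r, hr, hbr⟩ := h
        have hr02 : r ∈ Ioo 0 (2*π) := ⟨lt_of_lt_of_le hs02.1 hr.1, lt_of_le_of_lt hr.2 hu02.2⟩
        have : t₁ = r := by rw [ht₁def, ← hbr, C.th_e r hr02]
        exact absurd (this ▸ hr.1) (not_le.mpr hsIoo.1)
      · ext z; simp only [mem_inter_iff, mem_setOf_eq, mem_compl_iff, mem_empty_iff_false,
          iff_false]
        rintro ⟨⟨hza, hz⟩, h2⟩
        exact h2 ⟨C.th z, ⟨le_of_lt hz.1, le_of_lt hz.2⟩, C.e_th z hza⟩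
lemma g_iter_le (n : ℕ) {s t : ℝ} (hs : s ∈ Ioo 0 (2*π)) (ht : t ∈ Ioo 0 (2*π))
    (h : s ≤ t) : C.g^[n] s ≤ C.g^[n] t :=
  ((C.g_iter_mono n).monotoneOn) hs ht h

lemma exists_kappa {c : ℝ} (hc : c ∈ Ioo 0 (2*π)) {b : ℝ} (hb : 0 < b) :
    ∃ κ : ℝ, 0 < κ ∧ κ < b ∧ 0 < c - κ ∧ c + κ < 2*π ∧ c + κ < C.g (c - κ) := by
  have hδ : 0 < C.g c - c := sub_pos.mpr (C.g_gt c hc)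
  set δ := C.g c - c with hδdef
  have hcont : ContinuousAt C.g c := C.g_cont.continuousAt (isOpen_Ioo.mem_nhds hc)
  rw [Metric.continuousAt_iff] at hcont
  obtain ⟨η, hη, hcont⟩ := hcont (δ/3) (by linarith)
  refine ⟨min (min (b/2) (η/2)) (min (δ/4) (min (c/2) ((2*π - c)/2))), ?_, ?_, ?_, ?_, ?_⟩
  · have h1 : 0 < 2*π - c := by linarith [hc.2]
    have h2 : 0 < c := hc.1
    positivity
  · calc min (min (b/2) (η/2)) _ ≤ min (b/2) (η/2) := min_le_left _ _
      _ ≤ b/2 := min_le_left _ _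
      _ < b := by linarith
  · have : min (min (b/2) (η/2)) (min (δ/4) (min (c/2) ((2*π - c)/2))) ≤ c/2 :=
      le_trans (min_le_right _ _) (le_trans (min_le_right _ _) (min_le_left _ _))
    linarith [hc.1]
  · have : min (min (b/2) (η/2)) (min (δ/4) (min (c/2) ((2*π - c)/2))) ≤ (2*π - c)/2 :=
      le_trans (min_le_right _ _) (le_trans (min_le_right _ _) (min_le_right _ _))
    linarith [hc.2]
  · set κ := min (min (b/2) (η/2)) (min (δ/4) (min (c/2) ((2*π - c)/2))) with hκdef
    have hκη : κ ≤ η/2 := le_trans (min_le_left _ _) (min_le_right _ _)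
    have hκδ : κ ≤ δ/4 := le_trans (min_le_right _ _) (min_le_left _ _)
    have hdist : dist (c - κ) c < η := by
      rw [Real.dist_eq]
      have hκ0 : 0 < κ := by
        have h1 : 0 < 2*π - c := by linarith [hc.2]
        have h2 : 0 < c := hc.1
        positivity
      rw [_root_.abs_of_nonpos (by linarith)]
      linarith
    have := hcont hdist
    rw [Real.dist_eq, abs_sub_lt_iff] at this
    have hκ0 : 0 < κ := by
      have h1 : 0 < 2*π - c := by linarith [hc.2]
      have h2 : 0 < c := hc.1
      positivity
    -- g (c - κ) > g c - δ/3 = c + δ - δ/3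
    linarith [this.2]

lemma exists_window {v : Circle} (hv : v ≠ a) {lo hi : ℝ} (h : C.th v ∈ Ioo lo hi) :
    ∃ ε : ℝ, 0 < ε ∧ ∀ z : Circle, dist v z < ε → z ≠ a ∧ C.th z ∈ Ioo lo hi := by
  have hopen := C.isOpen_band (Ioo lo hi) isOpen_Ioo
  rw [Metric.isOpen_iff] at hopen
  obtain ⟨ε, hε, hball⟩ := hopen v ⟨hv, h⟩
  exact ⟨ε, hε, fun z hz => hball (by rwa [Metric.mem_ball, dist_comm])⟩

lemma exists_sep {M E : Set Circle} (hM : IsCompact M) (hE : IsClosed E)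
    (hdisj : ∀ z ∈ M, z ∉ E) :
    ∃ ε : ℝ, 0 < ε ∧ ∀ z ∈ M, ∀ x ∈ E, ¬ dist z x < ε := by
  obtain ⟨ε, hε, h⟩ := hM.exists_thickening_subset_open hE.isOpen_compl hdisj
  exact ⟨ε, hε, fun z hz x hx hd =>
    (h (Metric.mem_thickening_iff.mpr ⟨z, hz, by rwa [dist_comm]⟩)) hx⟩
include C in
lemma core (hfi : Function.Injective f) (hfa : f a = a)
    {E : Set Circle} (hEc : IsCompact E) (hEconn : IsPreconnected E) (hEne : E.Nonempty)
    (hEa : E ≠ {a}) (hEu : E ≠ univ) :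
    ∃ ε : ℝ, 0 < ε ∧ ∀ n : ℕ, 1 ≤ n → ∀ B : Set Circle, IsPreconnected B →
      (∀ b ∈ B, ∃ x ∈ E, dist b x < ε) → (∀ x ∈ E, ∃ b ∈ B, dist x b < ε) →
      (∀ b ∈ f^[n] '' B, ∃ x ∈ E, dist b x < ε) →
      (∀ x ∈ E, ∃ b ∈ f^[n] '' B, dist x b < ε) → False := by
  by_cases haE : a ∈ E
  · -- Case 2: a ∈ E
    set gapT := {t : ℝ | t ∈ Ioo 0 (2*π) ∧ C.e t ∉ E} with hgapdef
    have hgap_open : IsOpen gapT := by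
      have heq : gapT = Ioo 0 (2*π) ∩ C.e ⁻¹' Eᶜ := rfl
      rw [heq]
      exact isOpen_Ioo.inter (hEc.isClosed.isOpen_compl.preimage C.cont_e)
    have hgap_ne : gapT.Nonempty := by
      obtain ⟨w, hw⟩ : ∃ w, w ∉ E := by
        by_contra h; push_neg at h; exact hEu (eq_univ_of_forall h)
      have hwa : w ≠ a := fun h => hw (h ▸ haE)
      exact ⟨C.th w, C.th_mem w hwa, by rw [C.e_th w hwa]; exact hw⟩
    have hgap_bdd : BddAbove gapT := ⟨2*π, fun t ht => le_of_lt ht.1.2⟩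
    have hgap_bddb : BddBelow gapT := ⟨0, fun t ht => le_of_lt ht.1.1⟩
    set p := sInf gapT with hpdef
    set q := sSup gapT with hqdef
    have hp0 : 0 ≤ p := le_csInf hgap_ne (fun t ht => le_of_lt ht.1.1)
    have hq2 : q ≤ 2*π := csSup_le hgap_ne (fun t ht => le_of_lt ht.1.2)
    have hpq : p < q := by
      obtain ⟨t₀, ht₀⟩ := hgap_ne
      obtain ⟨η, hη, hball⟩ := Metric.isOpen_iff.mp hgap_open t₀ ht₀
      have hb1 : t₀ - η/2 ∈ gapT := hball (by
        rw [Metric.mem_ball, Real.dist_eq, _root_.abs_of_nonpos (by linarith)]; linarith)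
      have hb2 : t₀ + η/2 ∈ gapT := hball (by
        rw [Metric.mem_ball, Real.dist_eq, _root_.abs_of_nonneg (by linarith)]; linarith)
      calc p ≤ t₀ - η/2 := csInf_le hgap_bddb hb1
        _ < t₀ + η/2 := by linarith
        _ ≤ q := le_csSup hgap_bdd hb2
    have hIoo_sub : Ioo p q ⊆ gapT := by
      intro t₂ ht₂
      by_contra ht₂gap
      have ht₂02 : t₂ ∈ Ioo 0 (2*π) := ⟨lt_of_le_of_lt hp0 ht₂.1, lt_of_lt_of_le ht₂.2 hq2⟩
      have ht₂E : C.e t₂ ∈ E := by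
        by_contra h; exact ht₂gap ⟨ht₂02, h⟩
      obtain ⟨t₁, ht₁gap, ht₁lt⟩ := exists_lt_of_csInf_lt hgap_ne ht₂.1
      obtain ⟨t₃, ht₃gap, ht₃gt⟩ := exists_lt_of_lt_csSup hgap_ne ht₂.2
      have hIcc : Icc t₁ t₃ ⊆ Ioo 0 (2*π) := fun r hr =>
        ⟨lt_of_lt_of_le ht₁gap.1.1 hr.1, lt_of_le_of_lt hr.2 ht₃gap.1.2⟩
      have hU₁ : IsOpen {z : Circle | z ≠ a ∧ C.th z ∈ Ioo t₁ t₃} :=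
        C.isOpen_band _ isOpen_Ioo
      have hU₂ : IsOpen (C.e '' Icc t₁ t₃)ᶜ :=
        (isCompact_Icc.image C.cont_e).isClosed.isOpen_compl
      have hcov : E ⊆ {z : Circle | z ≠ a ∧ C.th z ∈ Ioo t₁ t₃} ∪ (C.e '' Icc t₁ t₃)ᶜ := by
        intro x hx
        by_cases hxi : x ∈ C.e '' Icc t₁ t₃
        · obtain ⟨r, hr, hrx⟩ := hxi
          have hr02 := hIcc hr
          have hxa : x ≠ a := hrx ▸ C.e_ne r hr02
          have hthx : C.th x = r := hrx ▸ C.th_e r hr02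
          have hrt₁ : r ≠ t₁ := fun h => ht₁gap.2 (by rw [← h, hrx]; exact hx)
          have hrt₃ : r ≠ t₃ := fun h => ht₃gap.2 (by rw [← h, hrx]; exact hx)
          exact Or.inl ⟨hxa, by
            rw [hthx]
            exact ⟨lt_of_le_of_ne hr.1 (Ne.symm hrt₁), lt_of_le_of_ne hr.2 hrt₃⟩⟩
        · exact Or.inr hxi
      have hx1 : (E ∩ {z : Circle | z ≠ a ∧ C.th z ∈ Ioo t₁ t₃}).Nonempty := by
        refine ⟨C.e t₂, ht₂E, C.e_ne t₂ ht₂02, ?_⟩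
        rw [C.th_e t₂ ht₂02]; exact ⟨ht₁lt, ht₃gt⟩
      have hx2 : (E ∩ (C.e '' Icc t₁ t₃)ᶜ).Nonempty := by
        refine ⟨a, haE, ?_⟩
        rintro ⟨r, hr, hra⟩
        exact C.e_ne r (hIcc hr) hra
      obtain ⟨z, -, ⟨hza, hz⟩, h2⟩ := hEconn _ _ hU₁ hU₂ hcov hx1 hx2
      exact h2 ⟨C.th z, ⟨le_of_lt hz.1, le_of_lt hz.2⟩, C.e_th z hza⟩
    have hnotboth : 0 < p ∨ q < 2*π := by
      by_contra h
      push_neg at h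
      obtain ⟨h1, h2⟩ := h
      apply hEa
      ext x
      simp only [mem_singleton_iff]
      constructor
      · intro hx
        by_contra hxa
        have hth := C.th_mem x hxa
        have hmem : C.th x ∈ gapT :=
          hIoo_sub ⟨lt_of_le_of_lt h1 hth.1, lt_of_lt_of_le hth.2 h2⟩
        exact hmem.2 (by rw [C.e_th x hxa]; exact hx)
      · rintro rfl; exact haE
    rcases lt_or_ge q (2*π) with hq2π | hq2π'
    · -- Subcase 2a : q < 2π
      have hq0 : 0 < q := lt_of_le_of_lt hp0 hpq
      have hq02 : q ∈ Ioo 0 (2*π) := ⟨hq0, hq2π⟩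
      have hqnot : q ∉ gapT := by
        intro h
        obtain ⟨η, hη, hball⟩ := Metric.isOpen_iff.mp hgap_open q h
        have hmem : q + η/2 ∈ gapT := hball (by
          rw [Metric.mem_ball, Real.dist_eq, _root_.abs_of_nonneg (by linarith)]; linarith)
        linarith [le_csSup hgap_bdd hmem]
      have hv'E : C.e q ∈ E := by
        by_contra h; exact hqnot ⟨hq02, h⟩
      have hv'a : C.e q ≠ a := C.e_ne q hq02
      obtain ⟨κ, hκ0, hκb, hκ1, hκ2, hκ3⟩ := C.exists_kappa hq02 (b := (q - p)/4) (by linarith)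
      set p' := (p + q)/2 with hp'def
      have hp'1 : p < p' := by rw [hp'def]; linarith
      have hp'2 : p' < q - κ := by rw [hp'def]; linarith
      have hp'02 : p' ∈ Ioo 0 (2*π) := ⟨by rw [hp'def]; linarith, by rw [hp'def]; linarith⟩
      have hMsub : ∀ r ∈ Icc p' (q - κ), C.e r ∉ E := fun r hr =>
        (hIoo_sub ⟨lt_of_lt_of_le hp'1 hr.1, lt_of_le_of_lt hr.2 (by linarith)⟩).2
      obtain ⟨ε₁, hε₁, hsep⟩ := exists_sep (isCompact_Icc.image C.cont_e) hEc.isClosed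
        (by rintro z ⟨r, hr, rfl⟩; exact hMsub r hr)
      obtain ⟨ε₂, hε₂, hwin⟩ := C.exists_window hv'a (lo := q - κ) (hi := q + κ)
        (by rw [C.th_e q hq02]; exact ⟨by linarith, by linarith⟩)
      refine ⟨min ε₁ ε₂, lt_min hε₁ hε₂, ?_⟩
      intro n hn B hB h1 h2 h3 h4
      obtain ⟨β₁, hβ₁B, hdβ₁⟩ := h2 _ hv'E
      obtain ⟨hβ₁a, hthβ₁⟩ := hwin β₁ (lt_of_lt_of_le hdβ₁ (min_le_right _ _))
      have hthβ₁02 := C.th_mem β₁ hβ₁a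
      obtain ⟨y, hyim, hdy⟩ := h4 _ hv'E
      obtain ⟨hya, hthy⟩ := hwin y (lt_of_lt_of_le hdy (min_le_right _ _))
      obtain ⟨b₀, hb₀B, hyeq⟩ := hyim
      have hb₀a : b₀ ≠ a := by
        intro h; apply hya; rw [← hyeq, h]; exact iter_fixed hfa n
      have ht₀02 := C.th_mem b₀ hb₀a
      have hthy_eq : C.th y = C.g^[n] (C.th b₀) := by
        rw [← hyeq]; exact C.th_iter hfi hfa b₀ hb₀a n
      have hqκ02 : q - κ ∈ Ioo 0 (2*π) := ⟨hκ1, by linarith⟩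
      have ht₀lt : C.th b₀ < q - κ := by
        by_contra h
        push_neg at h
        have h1' : C.g (q - κ) ≤ C.g (C.th b₀) := by
          rcases eq_or_lt_of_le h with h' | h'
          · rw [h']
          · exact le_of_lt (C.g_mono hqκ02 ht₀02 h')
        have h2' : C.g (C.th b₀) ≤ C.g^[n] (C.th b₀) := C.g_iter_ge ht₀02 hn
        rw [← hthy_eq] at h2'
        linarith [hthy.2]
      have ht₀p' : C.th b₀ < p' := by
        by_contra h
        push_neg at h
        have hmem : C.e (C.th b₀) ∈ C.e '' Icc p' (q - κ) :=
          ⟨C.th b₀, ⟨h, le_of_lt ht₀lt⟩, rfl⟩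
        obtain ⟨x, hx, hd⟩ := h1 b₀ hb₀B
        refine hsep _ hmem x hx ?_
        rw [C.e_th b₀ hb₀a]
        exact lt_of_lt_of_le hd (min_le_left _ _)
      have hlt12 : C.th b₀ < C.th β₁ := by linarith [hthβ₁.1]
      rcases C.arc_dichotomy hB hb₀B hβ₁B hb₀a hβ₁a hlt12 with hL | hR
      · have hmem : C.e p' ∈ B := hL p' ⟨le_of_lt ht₀p', by linarith [hthβ₁.1]⟩
        obtain ⟨x, hx, hd⟩ := h1 _ hmem
        exact hsep _ ⟨p', ⟨le_refl _, le_of_lt hp'2⟩, rfl⟩ x hx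
          (lt_of_lt_of_le hd (min_le_left _ _))
      · obtain ⟨s, hs02, hgs⟩ := C.g_iter_surj n hp'02
        have hst₀ : s < C.th b₀ := by
          by_contra h
          push_neg at h
          have hle := C.g_iter_le n ht₀02 hs02 h
          rw [hgs, ← hthy_eq] at hle
          linarith [hthy.1]
        have hesB : C.e s ∈ B := hR (C.e s) (Or.inr (by
          rw [C.th_e s hs02]
          intro hcon
          linarith [hcon.1]))
        have hmem : C.e p' ∈ f^[n] '' B :=
          ⟨C.e s, hesB, by rw [C.e_f_iter hfi hfa hs02 n, hgs]⟩
        obtain ⟨x, hx, hd⟩ := h3 _ hmem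
        exact hsep _ ⟨p', ⟨le_refl _, le_of_lt hp'2⟩, rfl⟩ x hx
          (lt_of_lt_of_le hd (min_le_left _ _))
    · -- Subcase 2b : q = 2π, p > 0
      have hq2π : q = 2*π := le_antisymm hq2 hq2π'
      have hp0' : 0 < p := by
        rcases hnotboth with h | h
        · exact h
        · exact absurd hq2π (ne_of_lt h)
      have hp02 : p ∈ Ioo 0 (2*π) := ⟨hp0', lt_of_lt_of_le hpq hq2⟩
      have hpnot : p ∉ gapT := by
        intro h
        obtain ⟨η, hη, hball⟩ := Metric.isOpen_iff.mp hgap_open p h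
        have hmem : p - η/2 ∈ gapT := hball (by
          rw [Metric.mem_ball, Real.dist_eq, _root_.abs_of_nonpos (by linarith)]; linarith)
        linarith [csInf_le hgap_bddb hmem]
      have hv'E : C.e p ∈ E := by
        by_contra h; exact hpnot ⟨hp02, h⟩
      have hv'a : C.e p ≠ a := C.e_ne p hp02
      obtain ⟨κ, hκ0, hκb, hκ1, hκ2, hκ3⟩ := C.exists_kappa hp02 (b := (2*π - p)/2)
        (by linarith [hp02.2])
      have hs₂ : p + κ < 2*π - κ := by linarith
      have hpκ02 : p + κ ∈ Ioo 0 (2*π) := ⟨by linarith, hκ2⟩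
      have hs₂02 : 2*π - κ ∈ Ioo 0 (2*π) := ⟨by linarith, by linarith⟩
      have hMsub : ∀ r ∈ Icc (p + κ) (2*π - κ), C.e r ∉ E := by
        intro r hr
        refine (hIoo_sub ⟨by linarith [hr.1], ?_⟩).2
        rw [hq2π]; linarith [hr.2]
      obtain ⟨ε₁, hε₁, hsep⟩ := exists_sep (isCompact_Icc.image C.cont_e) hEc.isClosed
        (by rintro z ⟨r, hr, rfl⟩; exact hMsub r hr)
      obtain ⟨ε₂, hε₂, hwin⟩ := C.exists_window hv'a (lo := p - κ) (hi := p + κ)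
        (by rw [C.th_e p hp02]; exact ⟨by linarith, by linarith⟩)
      refine ⟨min ε₁ ε₂, lt_min hε₁ hε₂, ?_⟩
      intro n hn B hB h1 h2 h3 h4
      obtain ⟨β₁, hβ₁B, hdβ₁⟩ := h2 _ hv'E
      obtain ⟨hβ₁a, hthβ₁⟩ := hwin β₁ (lt_of_lt_of_le hdβ₁ (min_le_right _ _))
      have hthβ₁02 := C.th_mem β₁ hβ₁a
      obtain ⟨y, hyim, hdy⟩ := h4 _ hv'E
      obtain ⟨hya, hthy⟩ := hwin y (lt_of_lt_of_le hdy (min_le_right _ _))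
      obtain ⟨b₀, hb₀B, hyeq⟩ := hyim
      have hb₀a : b₀ ≠ a := by
        intro h; apply hya; rw [← hyeq, h]; exact iter_fixed hfa n
      have ht₀02 := C.th_mem b₀ hb₀a
      have hthy_eq : C.th y = C.g^[n] (C.th b₀) := by
        rw [← hyeq]; exact C.th_iter hfi hfa b₀ hb₀a n
      have hpκ02' : p - κ ∈ Ioo 0 (2*π) := ⟨hκ1, by linarith⟩
      have ht₀lt : C.th b₀ < p - κ := by
        by_contra h
        push_neg at h
        have h1' : C.g (p - κ) ≤ C.g (C.th b₀) := by
          rcases eq_or_lt_of_le h with h' | h'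
          · rw [h']
          · exact le_of_lt (C.g_mono hpκ02' ht₀02 h')
        have h2' : C.g (C.th b₀) ≤ C.g^[n] (C.th b₀) := C.g_iter_ge ht₀02 hn
        rw [← hthy_eq] at h2'
        linarith [hthy.2]
      have hlt12 : C.th b₀ < C.th β₁ := by linarith [hthβ₁.1]
      rcases C.arc_dichotomy hB hb₀B hβ₁B hb₀a hβ₁a hlt12 with hL | hR
      · have hfβ₁ne : f^[n] β₁ ≠ a := iter_ne hfi hfa β₁ hβ₁a n
        have hYeq : C.th (f^[n] β₁) = C.g^[n] (C.th β₁) := C.th_iter hfi hfa β₁ hβ₁a n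
        have hYnotM : C.th (f^[n] β₁) ∉ Icc (p + κ) (2*π - κ) := by
          intro hcon
          have hmem : f^[n] β₁ ∈ C.e '' Icc (p + κ) (2*π - κ) :=
            ⟨C.th (f^[n] β₁), hcon, C.e_th _ hfβ₁ne⟩
          obtain ⟨x, hx, hd⟩ := h3 _ (mem_image_of_mem _ hβ₁B)
          exact hsep _ hmem x hx (lt_of_lt_of_le hd (min_le_left _ _))
        rw [hYeq] at hYnotM
        have hYgt : p + κ < C.g^[n] (C.th β₁) := by
          have h1' : C.g (p - κ) < C.g (C.th β₁) := C.g_mono hpκ02' hthβ₁02 hthβ₁.1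
          have h2' : C.g (C.th β₁) ≤ C.g^[n] (C.th β₁) := C.g_iter_ge hthβ₁02 hn
          linarith
        have hYgt₂ : 2*π - κ < C.g^[n] (C.th β₁) := by
          by_contra h
          push_neg at h
          exact hYnotM ⟨le_of_lt hYgt, h⟩
        obtain ⟨s, hs02, hgs⟩ := C.g_iter_surj n hpκ02
        have hst₀ : C.th b₀ < s := by
          by_contra h
          push_neg at h
          have hle := C.g_iter_le n hs02 ht₀02 h
          rw [hgs, ← hthy_eq] at hle
          linarith [hthy.2]
        have hsβ : s < C.th β₁ := by
          by_contra h
          push_neg at h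
          have hle := C.g_iter_le n hthβ₁02 hs02 h
          rw [hgs] at hle
          linarith
        have hesB : C.e s ∈ B := hL s ⟨le_of_lt hst₀, le_of_lt hsβ⟩
        have hmem : C.e (p + κ) ∈ f^[n] '' B :=
          ⟨C.e s, hesB, by rw [C.e_f_iter hfi hfa hs02 n, hgs]⟩
        obtain ⟨x, hx, hd⟩ := h3 _ hmem
        exact hsep _ ⟨p + κ, ⟨le_refl _, le_of_lt hs₂⟩, rfl⟩ x hx
          (lt_of_lt_of_le hd (min_le_left _ _))
      · have hmem : C.e (p + κ) ∈ B := hR (C.e (p + κ)) (Or.inr (by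
          rw [C.th_e _ hpκ02]
          intro hcon
          linarith [hcon.2, hthβ₁.2]))
        obtain ⟨x, hx, hd⟩ := h1 _ hmem
        exact hsep _ ⟨p + κ, ⟨le_refl _, le_of_lt hs₂⟩, rfl⟩ x hx
          (lt_of_lt_of_le hd (min_le_left _ _))
  · -- Case 1 : a ∉ E
    have hEsub : ∀ x ∈ E, x ≠ a := fun x hx h => haE (h ▸ hx)
    have hTc : IsCompact (C.th '' E) :=
      hEc.image_of_continuousOn
        (fun x hx => (C.contAt_th x (hEsub x hx)).continuousWithinAt)
    have hTne : (C.th '' E).Nonempty := hEne.image _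
    set M := sSup (C.th '' E) with hMdef
    have hMT : M ∈ C.th '' E := hTc.sSup_mem hTne
    obtain ⟨xM, hxME, hxMth⟩ := hMT
    have hM02 : M ∈ Ioo 0 (2*π) := hxMth ▸ C.th_mem xM (hEsub xM hxME)
    obtain ⟨κ, hκ0, -, hκ1, hκ2, hκ3⟩ := C.exists_kappa hM02 (b := 1) one_pos
    have hWopen : IsOpen {z : Circle | z ≠ a ∧ C.th z ∈ Iio (M + κ)} :=
      C.isOpen_band _ isOpen_Iio
    have hEW : E ⊆ {z : Circle | z ≠ a ∧ C.th z ∈ Iio (M + κ)} := by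
      intro x hx
      refine ⟨hEsub x hx, ?_⟩
      have : C.th x ≤ M := le_csSup hTc.bddAbove ⟨x, hx, rfl⟩
      simpa using lt_of_le_of_lt this (by linarith)
    obtain ⟨ε₁, hε₁, hthick⟩ := hEc.exists_thickening_subset_open hWopen hEW
    obtain ⟨ε₂, hε₂, hwin⟩ := C.exists_window (hEsub xM hxME)
      (lo := M - κ) (hi := M + κ) (by rw [hxMth]; exact ⟨by linarith, by linarith⟩)
    refine ⟨min ε₁ ε₂, lt_min hε₁ hε₂, ?_⟩
    intro n hn B hB h1 h2 h3 h4
    obtain ⟨β₁, hβ₁B, hdβ₁⟩ := h2 xM hxME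
    obtain ⟨hβ₁a, hthβ₁⟩ := hwin β₁ (lt_of_lt_of_le hdβ₁ (min_le_right _ _))
    have hthβ₁02 : C.th β₁ ∈ Ioo 0 (2*π) := C.th_mem β₁ hβ₁a
    have hfβ₁ : f^[n] β₁ ∈ f^[n] '' B := mem_image_of_mem _ hβ₁B
    have hfβ₁W : f^[n] β₁ ∈ {z : Circle | z ≠ a ∧ C.th z ∈ Iio (M + κ)} := by
      apply hthick
      obtain ⟨x, hx, hdx⟩ := h3 _ hfβ₁
      exact Metric.mem_thickening_iff.mpr ⟨x, hx, lt_of_lt_of_le hdx (min_le_left _ _)⟩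
    have hthiter : C.th (f^[n] β₁) = C.g^[n] (C.th β₁) := C.th_iter hfi hfa β₁ hβ₁a n
    have hchain1 : C.g (M - κ) < C.g (C.th β₁) :=
      C.g_mono ⟨by linarith [hM02.1], by linarith [hM02.2]⟩ hthβ₁02 hthβ₁.1
    have hchain2 : C.g (C.th β₁) ≤ C.g^[n] (C.th β₁) := C.g_iter_ge hthβ₁02 hn
    have hlt : C.th (f^[n] β₁) < M + κ := hfβ₁W.2
    rw [hthiter] at hlt
    linarith
end Chart

lemma exists_chart (f : Circle ≃ₜ Circle) (a : Circle)
    (ha : Function.fixedPoints ⇑f = {a}) : Nonempty (Chart ⇑f a) := by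
  have hfa : f a = a := by
    have h : a ∈ Function.fixedPoints ⇑f := by rw [ha]; exact rfl
    exact h
  have hfix_only : ∀ z : Circle, f z = z → z = a := by
    intro z hz
    have h : z ∈ Function.fixedPoints ⇑f := hz
    rwa [ha, mem_singleton_iff] at h
  set g₀ : ℝ → ℝ := fun t => th a (f (ee a t)) with hg₀def
  have hne : ∀ t ∈ Ioo 0 (2*π), f (ee a t) ≠ a := by
    intro t ht h
    exact ee_ne a ht (f.injective (h.trans hfa.symm))
  have hg_mem : ∀ t ∈ Ioo 0 (2*π), g₀ t ∈ Ioo 0 (2*π) := fun t ht =>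
    th_mem a (hne t ht)
  have h_ee_g₀ : ∀ t ∈ Ioo 0 (2*π), ee a (g₀ t) = f (ee a t) := fun t ht =>
    ee_th a (hne t ht)
  have h_th_f : ∀ z : Circle, z ≠ a → th a (f z) = g₀ (th a z) := by
    intro z hz
    rw [hg₀def]
    simp only
    rw [ee_th a hz]
  have hg_cont : ContinuousOn g₀ (Ioo 0 (2*π)) := by
    intro t ht
    refine ContinuousAt.continuousWithinAt ?_
    exact ContinuousAt.comp (g := th a) (contAt_th a (hne t ht))
      ((f.continuous.continuousAt).comp (cont_ee a).continuousAt)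
  have hg_inj : InjOn g₀ (Ioo 0 (2*π)) := by
    intro t ht s hs h
    have h1 : f (ee a t) = f (ee a s) := by
      rw [← h_ee_g₀ t ht, ← h_ee_g₀ s hs, h]
    have h2 : ee a t = ee a s := f.injective h1
    rw [← th_ee a ⟨ht.1, le_of_lt ht.2⟩, ← th_ee a ⟨hs.1, le_of_lt hs.2⟩, h2]
  have hg_nofix : ∀ t ∈ Ioo 0 (2*π), g₀ t ≠ t := by
    intro t ht h
    have h1 : f (ee a t) = ee a t := by rw [← h_ee_g₀ t ht, h]
    exact ee_ne a ht (hfix_only _ h1)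
  have hpi : (0:ℝ) < 2*π := by positivity
  have hπIoo : π ∈ Ioo 0 (2*π) := ⟨Real.pi_pos, by linarith [Real.pi_pos]⟩
  have hg_mono : StrictMonoOn g₀ (Ioo 0 (2*π)) := by
    rcases ContinuousOn.strictMonoOn_of_injOn_Ioo hpi hg_cont hg_inj with h | h
    · exact h
    · exfalso
      have hu : g₀ π ∈ Ioo 0 (2*π) := hg_mem π hπIoo
      rcases lt_or_gt_of_ne (hg_nofix π hπIoo) with hlt | hgt
      · -- g₀ π < π hence g₀ (g₀ π) > g₀ π ; IVT gives fixed point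
        have hgu : g₀ π < g₀ (g₀ π) := h hu hπIoo hlt
        have hsub : Icc (g₀ π) π ⊆ Ioo 0 (2*π) := fun r hr =>
          ⟨lt_of_lt_of_le hu.1 hr.1, lt_of_le_of_lt hr.2 hπIoo.2⟩
        have hIVT := intermediate_value_Icc' (le_of_lt hlt)
          ((hg_cont.sub continuousOn_id).mono hsub)
        obtain ⟨c, hc, hφc⟩ := hIVT (show (0:ℝ) ∈ Icc _ _ from ⟨by simp; linarith, by simp; linarith⟩)
        exact hg_nofix c (hsub hc) (by simp at hφc; linarith)
      · have hgu : g₀ (g₀ π) < g₀ π := h hπIoo hu hgt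
        have hsub : Icc π (g₀ π) ⊆ Ioo 0 (2*π) := fun r hr =>
          ⟨lt_of_lt_of_le hπIoo.1 hr.1, lt_of_le_of_lt hr.2 hu.2⟩
        have hIVT := intermediate_value_Icc' (le_of_lt hgt)
          ((hg_cont.sub continuousOn_id).mono hsub)
        obtain ⟨c, hc, hφc⟩ := hIVT (show (0:ℝ) ∈ Icc _ _ from ⟨by simp; linarith, by simp; linarith⟩)
        exact hg_nofix c (hsub hc) (by simp at hφc; linarith)
  have hg_surj : ∀ s ∈ Ioo 0 (2*π), ∃ t ∈ Ioo 0 (2*π), g₀ t = s := by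
    intro s hs
    set w := f.symm (ee a s) with hwdef
    have hwa : w ≠ a := by
      intro hh
      have h1 : ee a s = f a := by rw [← f.apply_symm_apply (ee a s), ← hwdef, hh]
      exact ee_ne a hs (h1.trans hfa)
    refine ⟨th a w, th_mem a hwa, ?_⟩
    rw [← h_th_f w hwa, hwdef, f.apply_symm_apply, th_ee a ⟨hs.1, le_of_lt hs.2⟩]
  by_cases hsign : ∀ t ∈ Ioo 0 (2*π), t < g₀ t
  · exact ⟨Chart.mk (ee a) (th a) g₀ (cont_ee a)
      (fun z hz => contAt_th a hz)
      (fun z hz => th_mem a hz)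
      (fun z hz => ee_th a hz)
      (fun t ht => th_ee a ⟨ht.1, le_of_lt ht.2⟩)
      (fun t ht => ee_ne a ht)
      h_th_f hg_mem hg_cont hg_mono hg_surj hsign⟩
  · have hneg : ∀ t ∈ Ioo 0 (2*π), g₀ t < t := by
      push_neg at hsign
      obtain ⟨t₀, ht₀, ht₀le⟩ := hsign
      have ht₀lt : g₀ t₀ < t₀ := lt_of_le_of_ne ht₀le (hg_nofix t₀ ht₀)
      intro t ht
      rcases lt_or_gt_of_ne (hg_nofix t ht) with hc | hc
      · exact hc
      · exfalso
        rcases le_total t t₀ with hle | hle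
        · have hsub : Icc t t₀ ⊆ Ioo 0 (2*π) := fun r hr =>
            ⟨lt_of_lt_of_le ht.1 hr.1, lt_of_le_of_lt hr.2 ht₀.2⟩
          have hIVT := intermediate_value_Icc' hle
            ((hg_cont.sub continuousOn_id).mono hsub)
          obtain ⟨c, hcmem, hφc⟩ := hIVT
            (show (0:ℝ) ∈ Icc _ _ from ⟨by simp; linarith, by simp; linarith⟩)
          exact hg_nofix c (hsub hcmem) (by simp at hφc; linarith)
        · have hsub : Icc t₀ t ⊆ Ioo 0 (2*π) := fun r hr =>
            ⟨lt_of_lt_of_le ht₀.1 hr.1, lt_of_le_of_lt hr.2 ht.2⟩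
          have hIVT := intermediate_value_Icc hle
            ((hg_cont.sub continuousOn_id).mono hsub)
          obtain ⟨c, hcmem, hφc⟩ := hIVT
            (show (0:ℝ) ∈ Icc _ _ from ⟨by simp; linarith, by simp; linarith⟩)
          exact hg_nofix c (hsub hcmem) (by simp at hφc; linarith)
    have hmem' : ∀ t : ℝ, t ∈ Ioo 0 (2*π) → 2*π - t ∈ Ioo 0 (2*π) := by
      intro t ht
      exact ⟨by linarith [ht.2], by linarith [ht.1]⟩
    refine ⟨Chart.mk (fun t => ee a (2*π - t)) (fun z => 2*π - th a z)
      (fun t => 2*π - g₀ (2*π - t)) ?_ ?_ ?_ ?_ ?_ ?_ ?_ ?_ ?_ ?_ ?_ ?_⟩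
    · exact (cont_ee a).comp (continuous_const.sub continuous_id)
    · exact fun z hz => continuousAt_const.sub (contAt_th a hz)
    · intro z hz
      have h1 := th_mem a hz
      show 2*π - th a z ∈ Ioo 0 (2*π)
      exact ⟨by linarith [h1.2], by linarith [h1.1]⟩
    · intro z hz
      show ee a (2*π - (2*π - th a z)) = z
      rw [show 2*π - (2*π - th a z) = th a z by ring]
      exact ee_th a hz
    · intro t ht
      show 2*π - th a (ee a (2*π - t)) = t
      rw [th_ee a ⟨(hmem' t ht).1, le_of_lt (hmem' t ht).2⟩]
      ring
    · intro t ht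
      show ee a (2*π - t) ≠ a
      exact ee_ne a (hmem' t ht)
    · intro z hz
      show 2*π - th a (f z) = 2*π - g₀ (2*π - (2*π - th a z))
      rw [h_th_f z hz, show 2*π - (2*π - th a z) = th a z by ring]
    · intro t ht
      have h1 := hg_mem (2*π - t) (hmem' t ht)
      show 2*π - g₀ (2*π - t) ∈ Ioo 0 (2*π)
      exact ⟨by linarith [h1.2], by linarith [h1.1]⟩
    · refine continuousOn_const.sub (hg_cont.comp
        ((continuous_const.sub continuous_id).continuousOn) ?_)
      exact fun t ht => hmem' t ht
    · intro s hs t ht hlt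
      show 2*π - g₀ (2*π - s) < 2*π - g₀ (2*π - t)
      have h1 := hg_mono (hmem' t ht) (hmem' s hs) (by linarith)
      linarith
    · intro s hs
      obtain ⟨u, hu, hgu⟩ := hg_surj (2*π - s) (hmem' s hs)
      refine ⟨2*π - u, hmem' u hu, ?_⟩
      show 2*π - g₀ (2*π - (2*π - u)) = s
      rw [show 2*π - (2*π - u) = u by ring, hgu]
      ring
    · intro t ht
      have h1 := hneg (2*π - t) (hmem' t ht)
      show t < 2*π - g₀ (2*π - t)
      linarith
lemma near_of_dist_lt {S T : NonemptyCompacts Circle} {ε : ℝ} (h : dist S T < ε) :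
    (∀ b ∈ (S : Set Circle), ∃ x ∈ (T : Set Circle), dist b x < ε) ∧
    (∀ x ∈ (T : Set Circle), ∃ b ∈ (S : Set Circle), dist x b < ε) := by
  rw [Metric.NonemptyCompacts.dist_eq] at h
  have hfin : EMetric.hausdorffEdist (S : Set Circle) (T : Set Circle) ≠ ⊤ :=
    Metric.hausdorffEdist_ne_top_of_nonempty_of_bounded S.nonempty T.nonempty
      S.isCompact.isBounded T.isCompact.isBounded
  constructor
  · intro b hb; exact Metric.exists_dist_lt_of_hausdorffDist_lt hb h hfin
  · intro x hx
    obtain ⟨b, hbS, hd⟩ := Metric.exists_dist_lt_of_hausdorffDist_lt' hx h hfin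
    exact ⟨b, hbS, by rwa [dist_comm] at hd⟩

lemma fixed_mem_nonWandering {X : Type*} [TopologicalSpace X] (F : X → X) (p : X)
    (hp : F p = p) : p ∈ nonWandering F := by
  intro U hU
  exact ⟨1, le_refl 1, ⟨p, ⟨p, mem_of_mem_nhds hU, by simp [hp]⟩, mem_of_mem_nhds hU⟩⟩

lemma inducedC_iter_carrier (f : Circle → Circle) (hf : Continuous f)
    (A : Subcontinua Circle) (n : ℕ) :
    (((inducedC f hf)^[n] A).1 : Set Circle) = f^[n] '' (A.1 : Set Circle) := by
  induction n with
  | zero => simp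
  | succ n ih =>
    rw [Function.iterate_succ_apply']
    show f '' (((inducedC f hf)^[n] A).1 : Set Circle) = _
    rw [ih, ← image_comp, ← Function.iterate_succ']

end Stmt17Aux
end

-- STATEMENT 17
theorem stmt17 (f : Circle ≃ₜ Circle) (a : Circle)
    (hfix : nonWandering ⇑f = Function.fixedPoints ⇑f)
    (ha : Function.fixedPoints ⇑f = {a}) :
    nonWandering (inducedC ⇑f f.continuous) =
      {(⟨⟨⟨{a}, isCompact_singleton⟩, Set.singleton_nonempty a⟩, isConnected_singleton⟩ :
          Subcontinua Circle),
       (⟨⟨⟨Set.univ, isCompact_univ⟩, Set.univ_nonempty⟩, circle_isConnected_univ⟩ :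
          Subcontinua Circle)} := by
  have hfa : f a = a := by
    have h : a ∈ Function.fixedPoints ⇑f := by rw [ha]; exact rfl
    exact h
  set Sa : Subcontinua Circle :=
    ⟨⟨⟨{a}, isCompact_singleton⟩, Set.singleton_nonempty a⟩, isConnected_singleton⟩ with hSadef
  set Su : Subcontinua Circle :=
    ⟨⟨⟨Set.univ, isCompact_univ⟩, Set.univ_nonempty⟩, circle_isConnected_univ⟩ with hSudef
  apply Set.eq_of_subset_of_subset
  · intro A hA
    by_contra hAnot
    simp only [Set.mem_insert_iff, Set.mem_singleton_iff] at hAnot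
    push_neg at hAnot
    obtain ⟨hA1, hA2⟩ := hAnot
    obtain ⟨C⟩ := Stmt17Aux.exists_chart f a ha
    have hEa : (A.1 : Set Circle) ≠ {a} := by
      intro h
      exact hA1 (Subtype.ext (NonemptyCompacts.ext h))
    have hEu : (A.1 : Set Circle) ≠ Set.univ := by
      intro h
      exact hA2 (Subtype.ext (NonemptyCompacts.ext h))
    obtain ⟨ε, hε, hcore⟩ := C.core f.injective hfa A.1.isCompact A.2.isPreconnected
      A.2.nonempty hEa hEu
    have hU : (Subtype.val ⁻¹' (Metric.ball A.1 ε) : Set (Subcontinua Circle)) ∈ nhds A := by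
      refine IsOpen.mem_nhds (Metric.isOpen_ball.preimage continuous_subtype_val) ?_
      exact Metric.mem_ball_self hε
    obtain ⟨n, hn, D, hD⟩ := hA _ hU
    obtain ⟨⟨B, hBU, hBD⟩, hDU⟩ := hD
    have hBdist : dist B.1 A.1 < ε := hBU
    have hDdist : dist (((inducedC ⇑f f.continuous)^[n]) B).1 A.1 < ε := by
      rw [hBD]; exact hDU
    have h12 := Stmt17Aux.near_of_dist_lt hBdist
    have h34 := Stmt17Aux.near_of_dist_lt hDdist
    rw [Stmt17Aux.inducedC_iter_carrier] at h34
    exact hcore n hn (B.1 : Set Circle) B.2.isPreconnected h12.1 h12.2 h34.1 h34.2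
  · intro A hA
    simp only [Set.mem_insert_iff, Set.mem_singleton_iff] at hA
    rcases hA with rfl | rfl
    · refine Stmt17Aux.fixed_mem_nonWandering _ _ ?_
      apply Subtype.ext
      apply NonemptyCompacts.ext
      show f '' {a} = {a}
      rw [Set.image_singleton, hfa]
    · refine Stmt17Aux.fixed_mem_nonWandering _ _ ?_
      apply Subtype.ext
      apply NonemptyCompacts.ext
      show f '' Set.univ = Set.univ
      rw [Set.image_univ_of_surjective f.surjective]
end

section
/- Let f be a continuous self-map of a compact metric space X, and let Z ⊆ X \ NW(f) be compact. Then M(Z) := sup_{x ∈ X} #{ n ∈ ℕ : f^n(x) ∈ Z } is finite. -/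
open Filter Topology TopologicalSpace Set
open scoped ENNReal

-- STATEMENT 18
theorem stmt18 {X : Type*} [MetricSpace X] [CompactSpace X] (f : X → X) (hf : Continuous f)
    (Z : Set X) (hZc : IsCompact Z) (hZ : ∀ z ∈ Z, z ∉ nonWandering f) :
    ∃ C : ℕ, ∀ x : X, {n : ℕ | f^[n] x ∈ Z}.Finite ∧ {n : ℕ | f^[n] x ∈ Z}.ncard ≤ C := by
  classical
  -- every point of Z has an open wandering neighbourhood
  have key : ∀ z : Z, ∃ U : Set X, IsOpen U ∧ (z : X) ∈ U ∧
      ∀ n, 1 ≤ n → (f^[n] '' U ∩ U) = ∅ := by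
    rintro ⟨z, hz⟩
    have h := hZ z hz
    simp only [nonWandering, Set.mem_setOf_eq, not_forall] at h
    obtain ⟨U, hU, hne⟩ := h
    push_neg at hne
    refine ⟨interior U, isOpen_interior, mem_interior_iff_mem_nhds.2 hU, ?_⟩
    intro n hn
    rw [Set.eq_empty_iff_forall_notMem]
    intro y hy
    have : y ∈ f^[n] '' U ∩ U :=
      ⟨Set.image_mono interior_subset hy.1, interior_subset hy.2⟩
    rw [hne n hn] at this
    exact this
  choose W hWopen hWmem hWw using key
  obtain ⟨t, ht⟩ := hZc.elim_finite_subcover W hWopen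
    (fun z hz => Set.mem_iUnion.2 ⟨⟨z, hz⟩, hWmem _⟩)
  refine ⟨t.card, fun x => ?_⟩
  set S := {n : ℕ | f^[n] x ∈ Z} with hS
  -- each wandering set is visited at most once
  have hsub : ∀ i : Z, ∀ n ∈ S, ∀ m ∈ S, f^[n] x ∈ W i → f^[m] x ∈ W i → n = m := by
    intro i n _ m _ hn hm
    by_contra hne
    rcases Nat.lt_or_ge n m with h | h
    · have : f^[m] x ∈ f^[m - n] '' W i ∩ W i := by
        refine ⟨⟨f^[n] x, hn, ?_⟩, hm⟩
        rw [← Function.iterate_add_apply]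
        congr 1; omega
      rw [hWw i (m - n) (by omega)] at this
      exact this
    · have hlt : m < n := lt_of_le_of_ne h (Ne.symm hne)
      have : f^[n] x ∈ f^[n - m] '' W i ∩ W i := by
        refine ⟨⟨f^[m] x, hm, ?_⟩, hn⟩
        rw [← Function.iterate_add_apply]
        congr 1; omega
      rw [hWw i (n - m) (by omega)] at this
      exact this
  -- pick for each n ∈ S an index
  have hpick : ∀ n ∈ S, ∃ i : Z, i ∈ t ∧ f^[n] x ∈ W i := by
    intro n hn
    have := ht hn
    simp only [Set.mem_iUnion] at this
    obtain ⟨i, hi, hmem⟩ := this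
    exact ⟨i, hi, hmem⟩
  by_cases hSe : S = ∅
  · rw [hSe]
    exact ⟨Set.finite_empty, by simp⟩
  obtain ⟨n₀, hn₀⟩ := Set.nonempty_iff_ne_empty.2 hSe
  have : Nonempty Z := ⟨(hpick n₀ hn₀).choose⟩
  set g : ℕ → Z := fun n => if h : n ∈ S then (hpick n h).choose else Classical.arbitrary Z
    with hg
  have hgmem : ∀ n ∈ S, g n ∈ t ∧ f^[n] x ∈ W (g n) := by
    intro n hn
    simp only [hg, dif_pos hn]
    exact (hpick n hn).choose_spec
  have hginj : Set.InjOn g S := by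
    intro n hn m hm hnm
    exact hsub (g n) n hn m hm (hgmem n hn).2 (hnm ▸ (hgmem m hm).2)
  have hmaps : ∀ n ∈ S, g n ∈ (↑t : Set Z) := fun n hn => (hgmem n hn).1
  have hfin : S.Finite := Set.Finite.of_finite_image (t.finite_toSet.subset
    (Set.image_subset_iff.2 hmaps)) hginj
  refine ⟨hfin, ?_⟩
  calc S.ncard ≤ (↑t : Set Z).ncard := Set.ncard_le_ncard_of_injOn g hmaps hginj t.finite_toSet
    _ = t.card := by rw [Set.ncard_coe_finset]
end
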